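/- In the lattice of Section 4, the class 2K_X + L₁ + L₂ + L₃ equals 9T̃ - 5E₀ - Σ₁³(2E_i + 4E_i') - E₄, and its self-intersection is (2K_X + ΣL_i)² = 81 - 25 - 3(4 + 16) - 1 = -5; hence K_V² = -5 for the bidouble cover V, and after contracting 12 disjoint (-1)-curves, K_{V'}² = -5 + 12 = 7. -/
import Mathlib

def ip9 (v w : Fin 9 → ℤ) : ℤ := v 0 * w 0 - ∑ i : Fin 8, v i.succ * w i.succ

def K9X : Fin 9 → ℤ := ![-3, 1, 1, 1, 1, 1, 1, 1, 1]
def L9₁ : Fin 9 → ℤ := ![7, -3, -2, -3, -2, -3, -2, -3, -2]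
def L9₂ : Fin 9 → ℤ := ![3, -1, -1, -1, -1, -1, -1, -1, 0]
def L9₃ : Fin 9 → ℤ := ![5, -3, -1, -2, -1, -2, -1, -2, -1]

/-- Section 4: 2K_X+L₁+L₂+L₃ ≡ 9T̃-5E₀-Σ₁³(2E_i+4E_i')-E₄, with
self-intersection (2K_X+ΣL_i)² = 81-25-3(4+16)-1 = -5, hence K_V² = -5 and after
contracting 12 disjoint (-1)-curves K_{V'}² = -5+12 = 7. -/
theorem stmt9 :
    (2 : ℤ) • K9X + L9₁ + L9₂ + L9₃ = ![9, -5, -2, -4, -2, -4, -2, -4, -1] ∧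
    ip9 ((2 : ℤ) • K9X + L9₁ + L9₂ + L9₃) ((2 : ℤ) • K9X + L9₁ + L9₂ + L9₃) =
      81 - 25 - 3 * (4 + 16) - 1 ∧
    ip9 ((2 : ℤ) • K9X + L9₁ + L9₂ + L9₃) ((2 : ℤ) • K9X + L9₁ + L9₂ + L9₃) = -5 ∧
    ip9 ((2 : ℤ) • K9X + L9₁ + L9₂ + L9₃) ((2 : ℤ) • K9X + L9₁ + L9₂ + L9₃) + 12 = 7 := by
  refine ⟨?_, ?_, ?_, ?_⟩ <;>
    simp [ip9, K9X, L9₁, L9₂, L9₃, Fin.sum_univ_succ]
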